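/- Let X be a compact Hausdorff totally disconnected topological space, and let Clopens(X) be the Boolean algebra of clopen subsets of X. Then the evaluation map sending x ∈ X to the homomorphism Clopens(X) → Bool given by b ↦ (x ∈ b) is a homeomorphism from X onto the Stone space St(Clopens(X)). -/
import Mathlib

open TopologicalSpace

/-- `φ : B → Bool` is a Boolean algebra homomorphism: it preserves `⊤`, `⊥`,
meets, joins and complements. -/
def IsBoolHom {B : Type*} [BooleanAlgebra B] (φ : B → Bool) : Prop :=
  φ ⊤ = ⊤ ∧ φ ⊥ = ⊥ ∧ (∀ a b : B, φ (a ⊓ b) = φ a ⊓ φ b) ∧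
  (∀ a b : B, φ (a ⊔ b) = φ a ⊔ φ b) ∧ (∀ a : B, φ aᶜ = (φ a)ᶜ)

/-- The Stone space of a Boolean algebra `B`: the set of Boolean algebra
homomorphisms `B → Bool`. -/
def StoneSpace (B : Type*) [BooleanAlgebra B] : Type _ :=
  {φ : B → Bool // IsBoolHom φ}

/-- The Stone space is topologized as a subspace of the product `Bool ^ B`,
where `Bool` carries the discrete topology. -/
instance (B : Type*) [BooleanAlgebra B] : TopologicalSpace (StoneSpace B) :=
  inferInstanceAs (TopologicalSpace {φ : B → Bool // IsBoolHom φ})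

instance (B : Type*) [BooleanAlgebra B] : T2Space (StoneSpace B) :=
  inferInstanceAs (T2Space {φ : B → Bool // IsBoolHom φ})

open Classical in
noncomputable def evalFun {X : Type*} [TopologicalSpace X] (x : X) (b : Clopens X) : Bool :=
  decide (x ∈ (b : Set X))

lemma evalFun_eq_true_iff {X : Type*} [TopologicalSpace X] (x : X) (b : Clopens X) :
    evalFun x b = true ↔ x ∈ (b : Set X) := by
  simp [evalFun]

lemma isBoolHom_evalFun {X : Type*} [TopologicalSpace X] (x : X) :
    IsBoolHom (evalFun x) := by
  classical
  refine ⟨?_, ?_, ?_, ?_, ?_⟩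
  · simp [evalFun]
  · simp [evalFun]
  · intro a b
    by_cases ha : x ∈ (a : Set X) <;> by_cases hb : x ∈ (b : Set X) <;>
      simp [evalFun, ha, hb]
  · intro a b
    by_cases ha : x ∈ (a : Set X) <;> by_cases hb : x ∈ (b : Set X) <;>
      simp [evalFun, ha, hb]
  · intro a
    by_cases ha : x ∈ (a : Set X) <;> simp [evalFun, ha]

/-- For a compact Hausdorff totally disconnected space `X`, the evaluation map
`x ↦ (b ↦ (x ∈ b))` is a homeomorphism from `X` onto the Stone space of the
Boolean algebra of clopen subsets of `X`. -/
theorem eval_homeomorph_stoneSpace_clopens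
    (X : Type*) [TopologicalSpace X] [CompactSpace X] [T2Space X]
    [TotallyDisconnectedSpace X] :
    ∃ e : X ≃ₜ StoneSpace (Clopens X),
      ∀ (x : X) (b : Clopens X), (e x).1 b = (⊤ : Bool) ↔ x ∈ (b : Set X) := by
  classical
  set ev : X → StoneSpace (Clopens X) := fun x => ⟨evalFun x, isBoolHom_evalFun x⟩ with hev
  have hinj : Function.Injective ev := by
    intro x y hxy
    by_contra hne
    obtain ⟨U, hU, hxU, hyU⟩ := exists_isClopen_of_totally_separated hne
    have := congrFun (congrArg Subtype.val hxy) ⟨U, hU⟩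
    simp only [hev, evalFun] at this
    rw [decide_eq_decide] at this
    exact hyU (this.mp hxU)
  have hsurj : Function.Surjective ev := by
    intro φ
    obtain ⟨φ, hT, hB, hI, hS, hC⟩ := φ
    have coeInf : ∀ s : Finset {b : Clopens X // φ b = true},
        ((s.inf Subtype.val : Clopens X) : Set X) = ⋂ b ∈ s, (b.1 : Set X) := by
      intro s
      induction s using Finset.induction with
      | empty => simp
      | @insert a s hb ih => simp [Finset.inf_insert, ih]
    have key : ∀ s : Finset {b : Clopens X // φ b = true},
        φ (s.inf Subtype.val) = true := by
      intro s
      induction s using Finset.induction with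
      | empty => simpa using hT
      | @insert a s hb ih =>
        rw [Finset.inf_insert, hI]
        simp [ih, a.2]
    have hne : (⋂ b : {b : Clopens X // φ b = true}, (b.1 : Set X)).Nonempty := by
      by_contra h
      rw [Set.not_nonempty_iff_eq_empty] at h
      obtain ⟨t, ht⟩ := IsCompact.elim_finite_subfamily_closed isCompact_univ
        (fun b : {b : Clopens X // φ b = true} => (b.1 : Set X))
        (fun b => b.1.2.1) (by rw [h]; simp)
      have hmem : ((t.inf Subtype.val : Clopens X) : Set X) = ∅ := by
        rw [coeInf]; simpa using ht
      have hbot : t.inf Subtype.val = (⊥ : Clopens X) := by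
        apply SetLike.coe_injective; simpa using hmem
      have kt := key t
      rw [hbot, hB] at kt
      simp at kt
    obtain ⟨x, hx⟩ := hne
    refine ⟨x, ?_⟩
    apply Subtype.ext
    funext b
    simp only [hev]
    rcases Bool.eq_false_or_eq_true (φ b) with h | h
    · have hxb : x ∈ (b : Set X) := Set.mem_iInter.mp hx ⟨b, h⟩
      rw [h]
      simp [evalFun, hxb]
    · have hc : φ bᶜ = true := by rw [hC, h]; simp
      have hxc : x ∈ ((bᶜ : Clopens X) : Set X) := Set.mem_iInter.mp hx ⟨bᶜ, hc⟩
      simp only [Clopens.coe_compl, Set.mem_compl_iff] at hxc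
      rw [h]
      simp [evalFun, hxc]
  have hcont : Continuous ev := by
    apply Continuous.subtype_mk
    apply continuous_pi
    intro b
    rw [continuous_discrete_rng]
    intro v
    rcases v with _ | _
    · have : (fun x => evalFun x b) ⁻¹' {false} = (↑b : Set X)ᶜ := by
        ext x; simp [evalFun]
      rw [this]; exact b.2.1.isOpen_compl
    · have : (fun x => evalFun x b) ⁻¹' {true} = (↑b : Set X) := by
        ext x; simp [evalFun]
      rw [this]; exact b.2.2
  let e := Equiv.ofBijective ev ⟨hinj, hsurj⟩
  refine ⟨hcont.homeoOfEquivCompactToT2 (f := e), ?_⟩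
  intro x b
  exact evalFun_eq_true_iff x b
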